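/- Let n ≥ 1. In ℝ^{n+1} let m_0 = (1, …, 1) and, for j = 1, …, n+1, let m_j be the vector with j-th coordinate −(n+1) and all other coordinates 1; set V = {m_0, …, m_{n+1}}. Consider the n+3 affine functions ℓ_⋆ ≡ 0 and ℓ_m(x) = 1 − ⟨m, x⟩ for m ∈ V, and let L(x) be their minimum. Define Trop ⊆ ℝ^{n+1} as the set of points x at which at least two distinct of these n+3 affine functions attain the minimum L(x). Then the set Ω = {x ∈ ℝ^{n+1} : ⟨m, x⟩ < 1 for all m ∈ V} is a bounded connected component of ℝ^{n+1} ∖ Trop, and every other connected component of ℝ^{n+1} ∖ Trop is unbounded. -/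

import Mathlib

/-- The vertices `m_0 = (1,…,1)` and, for `j = 1,…,n+1`, `m_j` with `j`-th coordinate
`−(n+1)` and all other coordinates `1`. -/
noncomputable def mvec (n : ℕ) : Fin (n + 2) → Fin (n + 1) → ℝ :=
  Fin.cases (fun _ => 1) fun j i => if i = j then -(n + 1 : ℝ) else 1

/-- The `n+3` affine functions `ℓ_⋆ ≡ 0` and `ℓ_m(x) = 1 − ⟨m, x⟩` for `m ∈ V`. -/
noncomputable def ell (n : ℕ) : Option (Fin (n + 2)) → (Fin (n + 1) → ℝ) → ℝ
  | none => fun _ => 0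
  | some j => fun x => 1 - ∑ i, mvec n j i * x i

/-- The tropicalization `L(x) = min(0, min_{m ∈ V} (1 − ⟨m, x⟩))`. -/
noncomputable def Lmin (n : ℕ) (x : Fin (n + 1) → ℝ) : ℝ :=
  Finset.univ.inf' Finset.univ_nonempty fun a : Option (Fin (n + 2)) => ell n a x

/-- The tropical hypersurface: points where at least two distinct of the `n+3` affine
functions attain the minimum `L(x)`. -/
def TropSet (n : ℕ) : Set (Fin (n + 1) → ℝ) :=
  {x | ∃ a b : Option (Fin (n + 2)), a ≠ b ∧ ell n a x = Lmin n x ∧ ell n b x = Lmin n x}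

/-- The open polytope `Ω = Int(P^*) = {x : ⟨m, x⟩ < 1 for all m ∈ V}`. -/
def OmegaSet (n : ℕ) : Set (Fin (n + 1) → ℝ) :=
  {x | ∀ j : Fin (n + 2), ∑ i, mvec n j i * x i < 1}

-- AUX START
noncomputable def dotp (n : ℕ) (j : Fin (n+2)) (x : Fin (n+1) → ℝ) : ℝ := ∑ i, mvec n j i * x i
noncomputable def gram (n : ℕ) (j k : Fin (n+2)) : ℝ := ∑ i, mvec n j i * mvec n k i

lemma mvec_zero (n : ℕ) (i : Fin (n+1)) : mvec n 0 i = 1 := rfl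
lemma mvec_succ (n : ℕ) (j i : Fin (n+1)) : mvec n j.succ i = if i = j then -(n+1:ℝ) else 1 := rfl

lemma sum_ite_one (n : ℕ) (p : Fin (n+1)) (a : ℝ) :
    ∑ i, (if i = p then a else (1:ℝ)) = a + n := by
  have h : ∀ i : Fin (n+1), (if i = p then a else (1:ℝ)) = (if i = p then a - 1 else 0) + 1 := by
    intro i; split <;> ring
  rw [Finset.sum_congr rfl fun i _ => h i, Finset.sum_add_distrib,
    Finset.sum_ite_eq' Finset.univ p (fun _ => a - 1)]
  simp only [Finset.mem_univ, if_true, Finset.sum_const, Finset.card_univ, Fintype.card_fin,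
    nsmul_eq_mul, mul_one]
  push_cast
  ring

lemma gram_diag_pos (n : ℕ) (k : Fin (n+2)) : 0 < gram n k k := by
  have hne : ∃ i, mvec n k i ≠ 0 := by
    induction k using Fin.cases with
    | zero => exact ⟨0, by rw [mvec_zero]; norm_num⟩
    | succ j =>
      refine ⟨j, ?_⟩
      rw [mvec_succ, if_pos rfl]
      have : (0:ℝ) < n + 1 := by positivity
      linarith
  obtain ⟨i, hi⟩ := hne
  apply Finset.sum_pos' (fun i _ => mul_self_nonneg _)
  exact ⟨i, Finset.mem_univ i, mul_self_pos.mpr hi⟩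

lemma gram_off_nonpos (n : ℕ) (j k : Fin (n+2)) (hjk : j ≠ k) : gram n j k ≤ 0 := by
  unfold gram
  induction j using Fin.cases with
  | zero =>
    induction k using Fin.cases with
    | zero => exact absurd rfl hjk
    | succ p =>
      simp only [mvec_zero, mvec_succ, one_mul]
      rw [sum_ite_one]
      linarith
  | succ q =>
    induction k using Fin.cases with
    | zero =>
      simp only [mvec_zero, mvec_succ, mul_one]
      rw [sum_ite_one]
      linarith
    | succ p =>
      have hqp : q ≠ p := fun h => hjk (by rw [h])
      simp only [mvec_succ]
      have h : ∀ i : Fin (n+1),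
          (if i = q then -(n+1:ℝ) else 1) * (if i = p then -(n+1:ℝ) else 1)
          = 1 + ((if i = q then -(n+1:ℝ) - 1 else 0) + (if i = p then -(n+1:ℝ) - 1 else 0)) := by
        intro i
        by_cases h1 : i = q <;> by_cases h2 : i = p
        · exact absurd (h1 ▸ h2) hqp
        all_goals simp [h1, h2, hqp, Ne.symm hqp]
      rw [Finset.sum_congr rfl fun i _ => h i, Finset.sum_add_distrib, Finset.sum_add_distrib,
        Finset.sum_ite_eq' Finset.univ q, Finset.sum_ite_eq' Finset.univ p]
      simp
      linarith

-- STAGE 2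
lemma dotp_ray (n : ℕ) (j k : Fin (n+2)) (x : Fin (n+1) → ℝ) (t : ℝ) :
    dotp n j (fun i => x i + t * mvec n k i) = dotp n j x + t * gram n j k := by
  unfold dotp gram
  have h : ∀ i : Fin (n+1), mvec n j i * (x i + t * mvec n k i)
      = mvec n j i * x i + t * (mvec n j i * mvec n k i) := fun i => by ring
  rw [Finset.sum_congr rfl fun i _ => h i, Finset.sum_add_distrib, ← Finset.mul_sum]

lemma ell_some (n : ℕ) (j : Fin (n+2)) (x : Fin (n+1) → ℝ) : ell n (some j) x = 1 - dotp n j x := rfl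
lemma ell_none (n : ℕ) (x : Fin (n+1) → ℝ) : ell n none x = 0 := rfl

lemma Lmin_le (n : ℕ) (a : Option (Fin (n+2))) (x : Fin (n+1) → ℝ) : Lmin n x ≤ ell n a x :=
  Finset.inf'_le _ (Finset.mem_univ a)

/-- If one function is a strict unique minimizer then x is not in Trop. -/
lemma unique_min_not_trop (n : ℕ) (x : Fin (n+1) → ℝ) (a0 : Option (Fin (n+2)))
    (h : ∀ c ≠ a0, ell n a0 x < ell n c x) : x ∉ TropSet n := by
  rintro ⟨a, b, hab, ha, hb⟩
  rcases eq_or_ne a a0 with h1 | h1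
  · have hb0 : b ≠ a0 := fun hh => hab (h1.trans hh.symm)
    have := h b hb0
    rw [hb] at this
    exact absurd (lt_of_le_of_lt (Lmin_le n a0 x) this) (lt_irrefl _)
  · have := h a h1
    rw [ha] at this
    exact absurd (lt_of_le_of_lt (Lmin_le n a0 x) this) (lt_irrefl _)

lemma omega_disjoint_trop (n : ℕ) : OmegaSet n ⊆ (TropSet n)ᶜ := by
  intro x hx
  refine unique_min_not_trop n x none ?_
  intro c hc
  match c with
  | none => exact absurd rfl hc
  | some j =>
    rw [ell_none, ell_some]
    have := hx j
    simp only [dotp]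
    linarith

/-- Points in the strict region of k are not in Trop. -/
lemma region_not_trop (n : ℕ) (k : Fin (n+2)) (y : Fin (n+1) → ℝ)
    (h1 : 1 < dotp n k y) (h2 : ∀ j ≠ k, dotp n j y < dotp n k y) : y ∉ TropSet n := by
  refine unique_min_not_trop n y (some k) ?_
  intro c hc
  match c with
  | none => rw [ell_none, ell_some]; linarith
  | some j =>
    have hjk : j ≠ k := fun hh => hc (by rw [hh])
    rw [ell_some, ell_some]
    have := h2 j hjk
    linarith

/-- From x ∉ Trop and x ∉ Ω, extract the strict region containing x. -/
lemma exists_region (n : ℕ) (x : Fin (n+1) → ℝ) (hx : x ∉ TropSet n) (hxo : x ∉ OmegaSet n) :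
    ∃ k, 1 < dotp n k x ∧ ∀ j ≠ k, dotp n j x < dotp n k x := by
  obtain ⟨a0, -, ha0⟩ := Finset.exists_mem_eq_inf' (Finset.univ_nonempty)
    (fun a : Option (Fin (n+2)) => ell n a x)
  have hL : Lmin n x = ell n a0 x := ha0
  have hstrict : ∀ c ≠ a0, ell n a0 x < ell n c x := by
    intro c hc
    rcases lt_or_eq_of_le (hL ▸ Lmin_le n c x) with h | h
    · exact h
    · exact absurd ⟨a0, c, fun hh => hc hh.symm, hL.symm, h ▸ hL.symm⟩ hx
  obtain ⟨j0, hj0⟩ : ∃ j0, 1 ≤ dotp n j0 x := by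
    simp only [OmegaSet, Set.mem_setOf_eq, not_forall] at hxo
    obtain ⟨j0, hj0⟩ := hxo
    exact ⟨j0, le_of_not_gt hj0⟩
  match a0, hstrict with
  | none, hstrict =>
    exfalso
    have := hstrict (some j0) (by simp)
    rw [ell_none, ell_some] at this
    linarith
  | some k, hstrict =>
    have hk0 : ell n (some k) x < ell n none x := hstrict none (by simp)
    rw [ell_none, ell_some] at hk0
    refine ⟨k, by linarith, fun j hjk => ?_⟩
    have := hstrict (some j) (fun hh => hjk (Option.some_injective _ hh))
    rw [ell_some, ell_some] at this
    linarith

-- STAGE 3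
lemma dotp_continuous (n : ℕ) (j : Fin (n+2)) : Continuous (dotp n j) := by
  unfold dotp
  exact continuous_finset_sum _ fun i _ => continuous_const.mul (continuous_apply i)

lemma dotp_linearmap (n : ℕ) (j : Fin (n+2)) : IsLinearMap ℝ (dotp n j) := by
  constructor
  · intro x y
    unfold dotp
    rw [← Finset.sum_add_distrib]
    exact Finset.sum_congr rfl fun i _ => by simp [mul_add]
  · intro c x
    unfold dotp
    rw [smul_eq_mul, Finset.mul_sum]
    exact Finset.sum_congr rfl fun i _ => by simp; ring

lemma omega_eq (n : ℕ) : OmegaSet n = ⋂ j, {x | dotp n j x < 1} := by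
  ext x; simp [OmegaSet, dotp]

lemma omega_open (n : ℕ) : IsOpen (OmegaSet n) := by
  rw [omega_eq]
  exact isOpen_iInter_of_finite fun j => isOpen_lt (dotp_continuous n j) continuous_const

lemma omega_convex (n : ℕ) : Convex ℝ (OmegaSet n) := by
  rw [omega_eq]
  exact convex_iInter fun j => convex_halfSpace_lt (dotp_linearmap n j) 1

def USet (n : ℕ) : Set (Fin (n+1) → ℝ) := ⋃ j, {x | 1 < dotp n j x}

lemma U_open (n : ℕ) : IsOpen (USet n) :=
  isOpen_iUnion fun j => isOpen_lt continuous_const (dotp_continuous n j)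

lemma omega_U_disjoint (n : ℕ) : Disjoint (OmegaSet n) (USet n) := by
  rw [Set.disjoint_left]
  rintro x hx ⟨s, ⟨j, rfl⟩, hj⟩
  have := hx j
  simp only [dotp, Set.mem_setOf_eq] at hj
  linarith

lemma trop_compl_subset (n : ℕ) : (TropSet n)ᶜ ⊆ OmegaSet n ∪ USet n := by
  intro x hx
  by_contra hcon
  rw [Set.mem_union, not_or] at hcon
  obtain ⟨ho, hu⟩ := hcon
  have hall : ∀ j, dotp n j x ≤ 1 := by
    intro j
    by_contra hj
    exact hu (Set.mem_iUnion.mpr ⟨j, lt_of_not_ge hj⟩)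
  obtain ⟨j0, hj0⟩ : ∃ j0, 1 ≤ dotp n j0 x := by
    simp only [OmegaSet, Set.mem_setOf_eq, not_forall] at ho
    obtain ⟨j0, h⟩ := ho
    exact ⟨j0, le_of_not_gt h⟩
  have heq : dotp n j0 x = 1 := le_antisymm (hall j0) hj0
  have hL : Lmin n x = 0 := by
    apply le_antisymm (Lmin_le n none x)
    apply Finset.le_inf'
    intro a _
    match a with
    | none => exact le_refl _
    | some j => rw [ell_none, ell_some]; have := hall j; linarith
  exact hx ⟨none, some j0, by simp, by rw [ell_none, hL], by rw [ell_some, heq, hL]; ring⟩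

lemma zero_mem_omega (n : ℕ) : (0 : Fin (n+1) → ℝ) ∈ OmegaSet n := by
  intro j
  simp

lemma omega_bounded (n : ℕ) (hn : 1 ≤ n) : Bornology.IsBounded (OmegaSet n) := by
  rw [isBounded_iff_forall_norm_le]
  refine ⟨n + 1, fun x hx => ?_⟩
  have hs : dotp n 0 x < 1 := hx 0
  have hs' : dotp n 0 x = ∑ i, x i := by
    unfold dotp; exact Finset.sum_congr rfl fun i _ => by rw [mvec_zero, one_mul]
  set s := ∑ i, x i with hsdef
  have hcoord : ∀ j : Fin (n+1), (n + 2 : ℝ) * x j > s - 1 := by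
    intro j
    have hj : dotp n j.succ x < 1 := hx j.succ
    have : dotp n j.succ x = s - (n + 2) * x j := by
      unfold dotp
      have h : ∀ i : Fin (n+1), mvec n j.succ i * x i
          = x i + (if i = j then -(n+2:ℝ) else 0) * x i := by
        intro i
        rw [mvec_succ]
        split <;> ring
      rw [Finset.sum_congr rfl fun i _ => h i, Finset.sum_add_distrib]
      have : ∀ i : Fin (n+1), (if i = j then -(n+2:ℝ) else 0) * x i
          = if i = j then -(n+2:ℝ) * x i else 0 := by intro i; split <;> ring
      rw [Finset.sum_congr rfl fun i _ => this i, Finset.sum_ite_eq' Finset.univ j]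
      simp [hsdef]
      ring
    linarith
  have hslb : -(n + 1 : ℝ) ≤ s := by
    have hsum : ∑ j : Fin (n+1), (s - 1) < ∑ j : Fin (n+1), (n + 2 : ℝ) * x j := by
      apply Finset.sum_lt_sum_of_nonempty Finset.univ_nonempty
      intro j _
      exact hcoord j
    rw [Finset.sum_const, Finset.card_univ, Fintype.card_fin, ← Finset.mul_sum,
      nsmul_eq_mul, ← hsdef] at hsum
    push_cast at hsum
    linarith
  have hlow : ∀ j : Fin (n+1), -1 ≤ x j := by
    intro j
    have h1 := hcoord j
    have h2 : (n + 2 : ℝ) * x j > -(n+2) := by linarith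
    nlinarith [h2]
  have hup : ∀ j : Fin (n+1), x j ≤ 1 + n := by
    intro j
    have hsplit : x j + ∑ i ∈ Finset.univ.erase j, x i = s := by
      rw [hsdef, Finset.add_sum_erase _ _ (Finset.mem_univ j)]
    have hrest : -(n : ℝ) ≤ ∑ i ∈ Finset.univ.erase j, x i := by
      have h1 : ∑ i ∈ Finset.univ.erase j, (-1 : ℝ) ≤ ∑ i ∈ Finset.univ.erase j, x i :=
        Finset.sum_le_sum fun i _ => hlow i
      rw [Finset.sum_const, Finset.card_erase_of_mem (Finset.mem_univ j),
        Finset.card_univ, Fintype.card_fin] at h1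
      simpa using h1
    linarith
  have hC : (0:ℝ) ≤ n + 1 := by positivity
  rw [pi_norm_le_iff_of_nonneg hC]
  intro i
  rw [Real.norm_eq_abs, abs_le]
  constructor
  · have := hlow i; linarith
  · have := hup i; linarith

-- STAGE 4
lemma mvec_big (n : ℕ) (k : Fin (n+2)) : ∃ i, 1 ≤ |mvec n k i| := by
  induction k using Fin.cases with
  | zero => exact ⟨0, by rw [mvec_zero]; norm_num⟩
  | succ j =>
    refine ⟨j, ?_⟩
    rw [mvec_succ, if_pos rfl, abs_neg, abs_of_pos (by positivity)]
    linarith [Nat.cast_nonneg (α := ℝ) n]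


/-- `Ω` is a bounded connected component of `ℝ^{n+1} ∖ Trop(X)`, and every
other connected component of the complement is unbounded. -/
theorem stmt_9 (n : ℕ) (hn : 1 ≤ n) :
    (OmegaSet n).Nonempty ∧
    Bornology.IsBounded (OmegaSet n) ∧
    (∀ x ∈ OmegaSet n, connectedComponentIn (TropSet n)ᶜ x = OmegaSet n) ∧
    (∀ x ∈ (TropSet n)ᶜ, x ∉ OmegaSet n →
      ¬ Bornology.IsBounded (connectedComponentIn (TropSet n)ᶜ x)) := by
  refine ⟨⟨0, zero_mem_omega n⟩, omega_bounded n hn, ?_, ?_⟩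
  · intro x hx
    apply Set.Subset.antisymm
    · exact IsPreconnected.subset_left_of_subset_union (omega_open n) (U_open n)
        (omega_U_disjoint n)
        ((connectedComponentIn_subset _ _).trans (trop_compl_subset n))
        ⟨x, mem_connectedComponentIn (omega_disjoint_trop n hx), hx⟩
        (isPreconnected_connectedComponentIn)
    · exact ((omega_convex n).isPreconnected).subset_connectedComponentIn hx
        (omega_disjoint_trop n)
  · intro x hxc hxo
    obtain ⟨k, hk1, hk2⟩ := exists_region n x hxc hxo
    set y : ℝ → (Fin (n+1) → ℝ) := fun t i => x i + t * mvec n k i with hy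
    have hmem : ∀ t, 0 ≤ t → y t ∈ (TropSet n)ᶜ := by
      intro t ht
      refine region_not_trop n k (y t) ?_ ?_
      · rw [hy]
        simp only []
        rw [dotp_ray]
        have h1 : 0 ≤ t * gram n k k := mul_nonneg ht (le_of_lt (gram_diag_pos n k))
        linarith
      · intro j hjk
        rw [hy]
        simp only []
        rw [dotp_ray, dotp_ray]
        have h1 : t * gram n j k ≤ 0 :=
          mul_nonpos_of_nonneg_of_nonpos ht (gram_off_nonpos n j k hjk)
        have h2 : 0 ≤ t * gram n k k := mul_nonneg ht (le_of_lt (gram_diag_pos n k))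
        have := hk2 j hjk
        linarith
    have hcont : Continuous y :=
      continuous_pi fun i => continuous_const.add (continuous_id.mul continuous_const)
    have hS : IsPreconnected (y '' Set.Ici 0) :=
      isPreconnected_Ici.image _ hcont.continuousOn
    have hx0 : x ∈ y '' Set.Ici 0 := ⟨0, Set.self_mem_Ici, funext fun i => by simp [hy]⟩
    have hsub : y '' Set.Ici 0 ⊆ (TropSet n)ᶜ := by
      rintro _ ⟨t, ht, rfl⟩
      exact hmem t ht
    have hray : y '' Set.Ici 0 ⊆ connectedComponentIn (TropSet n)ᶜ x :=
      hS.subset_connectedComponentIn hx0 hsub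
    intro hb
    rw [isBounded_iff_forall_norm_le] at hb
    obtain ⟨C, hC⟩ := hb
    obtain ⟨i0, hi0⟩ := mvec_big n k
    have hxC : ‖x‖ ≤ C := hC x (mem_connectedComponentIn hxc)
    have hC0 : 0 ≤ C := le_trans (norm_nonneg x) hxC
    set t : ℝ := C + |x i0| + 1 with hT
    have ht0 : 0 ≤ t := by positivity
    have hyC : ‖y t‖ ≤ C := hC (y t) (hray ⟨t, ht0, rfl⟩)
    have h1 : |y t i0| ≤ ‖y t‖ := by
      have := norm_le_pi_norm (y t) i0
      rwa [Real.norm_eq_abs] at this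
    have h2 : t ≤ |t * mvec n k i0| := by
      rw [abs_mul, abs_of_nonneg ht0]
      nlinarith [hi0]
    have h3 : |t * mvec n k i0| ≤ |y t i0| + |x i0| := by
      have heq : y t i0 - x i0 = t * mvec n k i0 := by simp [hy]
      rw [← heq]
      exact abs_sub _ _
    linarith
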